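/- Let G be a finite directed graph with node sets V1, V2 such that every node of G lies on some direct (V1–V2)-path. If a node v ∈ V1 is not contained in every minimum (V1,V2)-separator, then there exists a maximum (V1–V2)-linking one of whose paths starts at v. -/

import Mathlib

/-- A direct (A–T)-path: a nonempty simple directed path whose first node is in `A`,
whose last node is in `T`, and which meets `A` only at its first node and `T` only
at its last node. -/
def DirectPath {V : Type} (E : V → V → Prop) (A T : Set V) (l : List V) : Prop :=
  l ≠ [] ∧ l.Chain' E ∧ l.Nodup ∧
  (∃ a ∈ A, l.head? = some a) ∧
  (∃ b ∈ T, l.getLast? = some b) ∧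
  (∀ v ∈ l, v ∈ A → l.head? = some v) ∧
  (∀ v ∈ l, v ∈ T → l.getLast? = some v)

/-- An (A–T)-linking of size `p`: `p` pairwise vertex-disjoint direct (A–T)-paths. -/
def Linking {V : Type} (E : V → V → Prop) (A T : Set V) (p : ℕ)
    (P : Fin p → List V) : Prop :=
  (∀ i, DirectPath E A T (P i)) ∧
  ∀ i j, i ≠ j → ∀ v, v ∈ P i → v ∉ P j

/-- An (A,T)-separator: a node set met by every directed path from `A` to `T`. -/
def IsSeparator {V : Type} (E : V → V → Prop) (A T S : Set V) : Prop :=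
  ∀ l : List V, l ≠ [] → l.Chain' E →
    (∃ a ∈ A, l.head? = some a) → (∃ b ∈ T, l.getLast? = some b) →
    ∃ v ∈ l, v ∈ S

/-- Split a list at the first element satisfying a decidable predicate. -/
lemma exists_first_split {α : Type} (Q : α → Prop) [DecidablePred Q] :
    ∀ l : List α, (∃ x ∈ l, Q x) →
      ∃ pre u suf, l = pre ++ u :: suf ∧ Q u ∧ ∀ y ∈ pre, ¬ Q y := by
  intro l
  induction l with
  | nil => rintro ⟨x, hx, -⟩; simp at hx
  | cons a l ih =>
    intro h
    by_cases ha : Q a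
    · exact ⟨[], a, l, rfl, ha, by simp⟩
    · obtain ⟨x, hx, hQ⟩ := h
      rcases List.mem_cons.1 hx with rfl | hx
      · exact absurd hQ ha
      · obtain ⟨pre, u, suf, hl, hu, hpre⟩ := ih ⟨x, hx, hQ⟩
        refine ⟨a :: pre, u, suf, by simp [hl], hu, ?_⟩
        intro y hy
        rcases List.mem_cons.1 hy with rfl | hy
        · exact ha
        · exact hpre y hy

/-- If every node lies on a direct (A–T)-path and `v ∈ A` is not contained in every
minimum (A,T)-separator, then there exists a maximum (A–T)-linking one of whose
paths starts at `v`. -/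
theorem exists_max_linking_starting_at {V : Type} [Fintype V] [DecidableEq V]
    (E : V → V → Prop) (A T : Set V)
    (hcover : ∀ v : V, ∃ l, DirectPath E A T l ∧ v ∈ l)
    (p : ℕ)
    (hmax₁ : ∃ P : Fin p → List V, Linking E A T p P)
    (hmax₂ : ∀ q (P : Fin q → List V), Linking E A T q P → q ≤ p)
    (v : V) (hv : v ∈ A)
    (hnot : ¬ ∀ S : Finset V, IsSeparator E A T ↑S →
      (∀ S' : Finset V, IsSeparator E A T ↑S' → S.card ≤ S'.card) → v ∈ S) :
    ∃ P : Fin p → List V, Linking E A T p P ∧ ∃ i, (P i).head? = some v := by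
  classical
  obtain ⟨P, hP⟩ := hmax₁
  by_cases hvP : ∃ i, v ∈ P i
  · obtain ⟨i, hi⟩ := hvP
    exact ⟨P, hP, i, (hP.1 i).2.2.2.2.2.1 v hi hv⟩
  push_neg at hvP
  obtain ⟨ℓ, hℓd, hvℓ⟩ := hcover v
  obtain ⟨hℓne, hℓchain, hℓnodup, hℓA, hℓT, hℓA', hℓT'⟩ := hℓd
  have hℓhead : ℓ.head? = some v := hℓA' v hvℓ hv
  -- ℓ must meet the linking, otherwise we could extend it
  have hmeet : ∃ x ∈ ℓ, ∃ j, x ∈ P j := by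
    by_contra hcon
    push_neg at hcon
    have hQ : Linking E A T (p + 1) (Fin.cons ℓ P) := by
      constructor
      · intro i
        rcases Fin.eq_zero_or_eq_succ i with rfl | ⟨i', rfl⟩
        · rw [Fin.cons_zero]
          exact ⟨hℓne, hℓchain, hℓnodup, hℓA, hℓT, hℓA', hℓT'⟩
        · rw [Fin.cons_succ]; exact hP.1 i'
      · intro i j hij x hxi hxj
        rcases Fin.eq_zero_or_eq_succ i with rfl | ⟨i', rfl⟩ <;>
          rcases Fin.eq_zero_or_eq_succ j with rfl | ⟨j', rfl⟩
        · exact hij rfl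
        · rw [Fin.cons_zero] at hxi; rw [Fin.cons_succ] at hxj
          exact hcon x hxi j' hxj
        · rw [Fin.cons_succ] at hxi; rw [Fin.cons_zero] at hxj
          exact hcon x hxj i' hxi
        · rw [Fin.cons_succ] at hxi hxj
          refine hP.2 i' j' ?_ x hxi hxj
          intro h; exact hij (by rw [h])
    have := hmax₂ (p + 1) _ hQ
    omega
  -- split ℓ at the first vertex meeting the linking
  obtain ⟨pre, u, suf, hsplit, hu, hpreQ⟩ :=
    exists_first_split (fun x => ∃ j, x ∈ P j) ℓ hmeet
  obtain ⟨j, hupj⟩ := hu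
  have hpre' : ∀ y ∈ pre, ∀ j', y ∉ P j' := by
    intro y hy j' hyj'
    exact hpreQ y hy ⟨j', hyj'⟩
  -- pre starts with v
  have hprenil : pre ≠ [] := by
    rintro rfl
    rw [hsplit] at hℓhead
    simp only [List.nil_append, List.head?_cons] at hℓhead
    obtain rfl := Option.some.inj hℓhead
    exact hvP j hupj
  obtain ⟨a, pre', hpe⟩ := List.exists_cons_of_ne_nil hprenil
  have hav : a = v := by
    rw [hpe] at hsplit
    rw [hsplit] at hℓhead
    simpa using hℓhead
  rw [hav] at hpe
  subst hpe
  -- split P j at u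
  obtain ⟨α, β, hPj⟩ := List.append_of_mem hupj
  obtain ⟨hjne, hjchain, hjnodup, hjA, hjT, hjA', hjT'⟩ := hP.1 j
  -- basic membership facts
  have hmemβ : ∀ x ∈ u :: β, x ∈ P j := by
    intro x hx; rw [hPj]; exact List.mem_append_right _ hx
  have hmempre : ∀ y ∈ v :: pre', y ∈ ℓ := by
    intro y hy; rw [hsplit]; exact List.mem_append_left _ hy
  have huℓ : u ∈ ℓ := by
    rw [hsplit]; exact List.mem_append_right _ (List.mem_cons_self)
  have huv : u ≠ v := by
    rintro rfl; exact hvP j hupj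
  -- chain facts
  rw [hsplit, List.Chain', List.isChain_append] at hℓchain
  rw [hPj, List.Chain', List.isChain_append] at hjchain
  rw [hsplit, List.nodup_append'] at hℓnodup
  rw [hPj, List.nodup_append'] at hjnodup
  set L : List V := (v :: pre') ++ u :: β with hL
  have hLne : L ≠ [] := by simp [hL]
  have hLchain : L.Chain' E := by
    rw [hL, List.Chain', List.isChain_append]
    refine ⟨hℓchain.1, hjchain.2.1, ?_⟩
    intro x hx y hy
    simp only [List.head?_cons, Option.mem_def, Option.some.injEq] at hy
    subst hy
    exact hℓchain.2.2 x hx u (by simp)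
  have hLnodup : L.Nodup := by
    rw [hL, List.nodup_append']
    refine ⟨hℓnodup.1, hjnodup.2.1, ?_⟩
    intro x hx hx'
    exact hpre' x hx j (hmemβ x hx')
  have hLhead : L.head? = some v := by simp [hL]
  have hLlast : L.getLast? = (P j).getLast? := by
    obtain ⟨z, hz⟩ : ∃ z, (u :: β).getLast? = some z :=
      ⟨(u :: β).getLast (by simp), List.getLast?_eq_getLast (by simp)⟩
    rw [hL, hPj, List.getLast?_append, List.getLast?_append, hz]
    rfl
  have hLA : ∀ w ∈ L, w ∈ A → L.head? = some w := by
    intro w hw hwA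
    rw [hL, List.mem_append] at hw
    rcases hw with hw | hw
    · have := hℓA' w (hmempre w hw) hwA
      rw [hℓhead] at this
      rw [hLhead, Option.some.inj this]
    · -- w ∈ u :: β, w ∈ A : impossible
      exfalso
      have hwPj : w ∈ P j := hmemβ w hw
      have hhd := hjA' w hwPj hwA
      rw [hPj] at hhd
      cases α with
      | nil =>
        simp only [List.nil_append, List.head?_cons, Option.some.injEq] at hhd
        -- u = w ∈ A, so ℓ starts at u, so u = v, contradiction
        have := hℓA' u huℓ (by rw [hhd]; exact hwA)
        rw [hℓhead] at this
        exact huv (Option.some.inj this).symm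
      | cons a' α' =>
        simp only [List.cons_append, List.head?_cons, Option.some.injEq] at hhd
        subst hhd
        exact hjnodup.2.2 (List.mem_cons_self) hw
  have hLT : ∀ w ∈ L, w ∈ T → L.getLast? = some w := by
    intro w hw hwT
    rw [hL, List.mem_append] at hw
    rcases hw with hw | hw
    · -- w ∈ pre part and w ∈ T : impossible
      exfalso
      have hlast := hℓT' w (hmempre w hw) hwT
      rw [hsplit, List.getLast?_append] at hlast
      obtain ⟨z, hz⟩ : ∃ z, (u :: suf).getLast? = some z :=
        ⟨(u :: suf).getLast (by simp), List.getLast?_eq_getLast (by simp)⟩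
      rw [hz] at hlast
      have hzw : z = w := by
        simpa using hlast
      subst hzw
      exact hℓnodup.2.2 hw (List.mem_of_mem_getLast? (Option.mem_def.mpr hz))
    · rw [hLlast]
      exact hjT' w (hmemβ w hw) hwT
  have hLd : DirectPath E A T L := by
    refine ⟨hLne, hLchain, hLnodup, ⟨v, hv, hLhead⟩, ?_, hLA, hLT⟩
    · obtain ⟨b, hbT, hb⟩ := hjT
      exact ⟨b, hbT, by rw [hLlast]; exact hb⟩
  -- the new linking
  refine ⟨Function.update P j L, ⟨?_, ?_⟩, j, ?_⟩
  · intro i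
    by_cases hij : i = j
    · subst hij; rw [Function.update_self]; exact hLd
    · rw [Function.update_of_ne hij]; exact hP.1 i
  · intro i k hik x hxi hxk
    have hLmem : ∀ x, x ∈ L → ∀ k', k' ≠ j → x ∉ P k' := by
      intro x hx k' hk'
      rw [hL, List.mem_append] at hx
      rcases hx with hx | hx
      · exact hpre' x hx k'
      · exact hP.2 j k' (fun h => hk' h.symm) x (hmemβ x hx)
    by_cases hij : i = j <;> by_cases hkj : k = j
    · exact hik (hij.trans hkj.symm)
    · subst hij
      rw [Function.update_self] at hxi
      rw [Function.update_of_ne hkj] at hxk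
      exact hLmem x hxi k hkj hxk
    · subst hkj
      rw [Function.update_of_ne hij] at hxi
      rw [Function.update_self] at hxk
      exact hLmem x hxk i hij hxi
    · rw [Function.update_of_ne hij] at hxi
      rw [Function.update_of_ne hkj] at hxk
      exact hP.2 i k hik x hxi hxk
  · rw [Function.update_self]
    exact hLhead
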